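/- arXiv:1904.04158 — 4 statements merged into one kernel-verified Lean document; each statement's English description precedes it below -/
import Mathlib

section
/- Let Q ∈ ℝ^{m×d} satisfy ‖Qᵀe_j‖_{ℓ2} ≤ ν√(d/m) for every 1 ≤ j ≤ m, and let E ∈ ℝ^{m×n} be such that Supp(E) ⊆ Supp(S*), where each column of S* has at most α₁·m nonzero entries. Then for every column index l ∈ {1,…,n}, ‖QᵀE e_l‖_{ℓ2} ≤ ν·α₁·√(md)·‖E‖_{ℓ∞}. -/
open Matrix
open scoped BigOperators

noncomputable def l2 {n : ℕ} (v : Fin n → ℝ) : ℝ := Real.sqrt (∑ i, v i ^ 2)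

noncomputable def vinf {n : ℕ} (v : Fin n → ℝ) : ℝ := ⨆ i, |v i|

noncomputable def linf {m n : ℕ} (X : Matrix (Fin m) (Fin n) ℝ) : ℝ := ⨆ i, ⨆ j, |X i j|

noncomputable def frob {m n : ℕ} (X : Matrix (Fin m) (Fin n) ℝ) : ℝ :=
  Real.sqrt (∑ i, ∑ j, X i j ^ 2)

noncomputable def spec {m n : ℕ} (X : Matrix (Fin m) (Fin n) ℝ) : ℝ :=
  ‖LinearMap.toContinuousLinearMap (Matrix.toEuclideanLin X)‖

def supp {m n : ℕ} (X : Matrix (Fin m) (Fin n) ℝ) : Set (Fin m × Fin n) :=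
  {p | X p.1 p.2 ≠ 0}

noncomputable def sthr {m n : ℕ} (ζ : ℝ) (X : Matrix (Fin m) (Fin n) ℝ) :
    Matrix (Fin m) (Fin n) ℝ :=
  Matrix.of fun i j => Real.sign (X i j) * max (|X i j| - ζ) 0

lemma l2_eq_norm {k : ℕ} (v : Fin k → ℝ) :
    l2 v = ‖(WithLp.equiv 2 (Fin k → ℝ)).symm v‖ := by
  rw [EuclideanSpace.norm_eq]
  simp [l2, sq_abs]

/-- column bound `‖QᵀE e_l‖_{ℓ2} ≤ ν·α₁·√(md)·‖E‖_{ℓ∞}` when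
`Supp(E) ⊆ Supp(S*)` and each column of `S*` has at most `α₁·m` nonzeros. -/
theorem stmt1 (m n d : ℕ) (hm : 0 < m) (hn : 0 < n) (hd : 0 < d)
    (ν α₁ : ℝ) (hν : 0 < ν) (hα₁ : 0 < α₁) (hα₁' : α₁ < 1)
    (Q : Matrix (Fin m) (Fin d) ℝ) (E Sstar : Matrix (Fin m) (Fin n) ℝ)
    (hQ : ∀ j : Fin m, l2 (Qᵀ *ᵥ Pi.single j 1) ≤ ν * Real.sqrt ((d : ℝ) / m))
    (hsupp : supp E ⊆ supp Sstar)
    (hcol : ∀ j : Fin n, ((Finset.univ.filter fun i => Sstar i j ≠ 0).card : ℝ) ≤ α₁ * m) :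
    ∀ l : Fin n, l2 (Qᵀ *ᵥ fun i => E i l) ≤ ν * α₁ * Real.sqrt ((m : ℝ) * d) * linf E := by
  intro l
  classical
  set S : Finset (Fin m) := Finset.univ.filter (fun i => E i l ≠ 0) with hS
  -- bound on entries
  have hEbd : ∀ i : Fin m, |E i l| ≤ linf E := by
    intro i
    have h1 : |E i l| ≤ ⨆ j, |E i j| :=
      le_ciSup (f := fun j => |E i j|) (Set.Finite.bddAbove (Set.finite_range _)) l
    have h2 : (⨆ j, |E i j|) ≤ linf E :=
      le_ciSup (f := fun i => ⨆ j, |E i j|) (Set.Finite.bddAbove (Set.finite_range _)) i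
    exact h1.trans h2
  have hlinf0 : 0 ≤ linf E := (abs_nonneg _).trans (hEbd ⟨0, hm⟩)
  -- decompose the column
  have hEcol : (fun i => E i l) = ∑ i ∈ S, E i l • (Pi.single i 1 : Fin m → ℝ) := by
    funext j
    rw [Finset.sum_apply]
    simp only [Pi.smul_apply, Pi.single_apply, smul_eq_mul, mul_ite, mul_one, mul_zero]
    rw [Finset.sum_ite_eq S j (fun i => E i l)]
    by_cases hj : j ∈ S
    · simp [hj]
    · have : E j l = 0 := by
        by_contra h
        exact hj (by simp [hS, h])
      simp [hj, this]
  have hmv : Qᵀ *ᵥ (fun i => E i l) = ∑ i ∈ S, E i l • (Qᵀ *ᵥ Pi.single i 1) := by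
    rw [hEcol, show Qᵀ *ᵥ (∑ i ∈ S, E i l • (Pi.single i 1 : Fin m → ℝ))
      = Qᵀ.mulVecLin (∑ i ∈ S, E i l • (Pi.single i 1 : Fin m → ℝ)) from rfl, map_sum]
    exact Finset.sum_congr rfl fun i _ => by
      rw [Matrix.mulVecLin_apply, Matrix.mulVec_smul]
  -- triangle inequality in EuclideanSpace
  have htr : l2 (Qᵀ *ᵥ fun i => E i l) ≤
      ∑ i ∈ S, |E i l| * l2 (Qᵀ *ᵥ Pi.single i 1) := by
    rw [l2_eq_norm, hmv]
    have : (WithLp.equiv 2 (Fin d → ℝ)).symm (∑ i ∈ S, E i l • (Qᵀ *ᵥ Pi.single i 1))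
        = ∑ i ∈ S, E i l • (WithLp.equiv 2 (Fin d → ℝ)).symm (Qᵀ *ᵥ Pi.single i 1) := by
        ext k; simp [Finset.sum_apply]
    rw [this]
    refine (norm_sum_le _ _).trans ?_
    refine Finset.sum_le_sum fun i _ => ?_
    rw [norm_smul, l2_eq_norm, Real.norm_eq_abs]
  -- bound each term
  have hterm : ∀ i ∈ S, |E i l| * l2 (Qᵀ *ᵥ Pi.single i 1)
      ≤ linf E * (ν * Real.sqrt ((d : ℝ) / m)) := by
    intro i _
    have h0 : 0 ≤ l2 (Qᵀ *ᵥ Pi.single i 1) := Real.sqrt_nonneg _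
    exact mul_le_mul (hEbd i) (hQ i) h0 hlinf0
  -- cardinality bound
  have hcard : (S.card : ℝ) ≤ α₁ * m := by
    refine le_trans ?_ (hcol l)
    have hsub : S ⊆ Finset.univ.filter (fun i => Sstar i l ≠ 0) := by
      intro i hi
      simp only [hS, Finset.mem_filter, Finset.mem_univ, true_and] at hi ⊢
      exact hsupp (show (i, l) ∈ supp E from hi)
    exact_mod_cast Finset.card_le_card hsub
  have hsum : ∑ i ∈ S, |E i l| * l2 (Qᵀ *ᵥ Pi.single i 1)
      ≤ (S.card : ℝ) * (linf E * (ν * Real.sqrt ((d : ℝ) / m))) := by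
    calc ∑ i ∈ S, |E i l| * l2 (Qᵀ *ᵥ Pi.single i 1)
        ≤ ∑ _i ∈ S, linf E * (ν * Real.sqrt ((d : ℝ) / m)) :=
          Finset.sum_le_sum hterm
      _ = (S.card : ℝ) * (linf E * (ν * Real.sqrt ((d : ℝ) / m))) := by
          rw [Finset.sum_const, nsmul_eq_mul]
  -- arithmetic
  have hm' : (0 : ℝ) < m := by exact_mod_cast hm
  have hsqrt : (m : ℝ) * Real.sqrt ((d : ℝ) / m) = Real.sqrt ((m : ℝ) * d) := by
    rw [show (m : ℝ) = Real.sqrt ((m : ℝ) ^ 2) from (Real.sqrt_sq hm'.le).symm,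
      ← Real.sqrt_mul (by positivity)]
    congr 1
    field_simp
    ring
    rw [Real.sq_sqrt (by positivity)]
  have hfinal : (S.card : ℝ) * (linf E * (ν * Real.sqrt ((d : ℝ) / m)))
      ≤ ν * α₁ * Real.sqrt ((m : ℝ) * d) * linf E := by
    have h1 : (S.card : ℝ) * (linf E * (ν * Real.sqrt ((d : ℝ) / m)))
        ≤ (α₁ * m) * (linf E * (ν * Real.sqrt ((d : ℝ) / m))) := by
      apply mul_le_mul_of_nonneg_right hcard
      positivity
    refine h1.trans_eq ?_
    rw [show (α₁ * m) * (linf E * (ν * Real.sqrt ((d : ℝ) / m)))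
        = ν * α₁ * ((m : ℝ) * Real.sqrt ((d : ℝ) / m)) * linf E by ring, hsqrt]
  exact htr.trans (hsum.trans hfinal)
end

section
/- Assume μ ≥ 1, n ≥ 5μ², and 0 < δ ≤ 1/(20μ²). Let S, L ∈ ℝ^{m×n} with Supp(S* − S) ⊆ Supp(S*), set E = S* − S, G = Σ_{i=1}^n Q_i Q_iᵀ(L − L*)e_i e_iᵀ, F = Σ_{i=1}^n Q_i Q_iᵀ(S − S*)e_i e_iᵀ, M = F + G + E, s = ‖E‖_{ℓ∞}, and l = max_i ‖G e_i‖_{ℓ2}. Then for every i ∈ {1,…,n} and every v ∈ ℝ^n: ‖Q_iᵀ M v‖_{ℓ2} ≤ ( l/(4μ²) + (5/4)·α₁·ν·√(md)·s )·n·‖v‖_{ℓ∞}. -/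
open Matrix
open scoped BigOperators

lemma l2_mulVec_le {a b : ℕ} (X : Matrix (Fin a) (Fin b) ℝ) (v : Fin b → ℝ) :
    l2 (X *ᵥ v) ≤ spec X * l2 v := by
  rw [l2_eq_norm, l2_eq_norm]
  have h : (WithLp.equiv 2 (Fin a → ℝ)).symm (X *ᵥ v)
      = Matrix.toEuclideanLin X ((WithLp.equiv 2 (Fin b → ℝ)).symm v) := rfl
  rw [h]
  exact (LinearMap.toContinuousLinearMap (Matrix.toEuclideanLin X)).le_opNorm _

lemma spec_transpose {a b : ℕ} (X : Matrix (Fin a) (Fin b) ℝ) : spec Xᵀ = spec X := by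
  unfold spec
  rw [← Matrix.conjTranspose_eq_transpose_of_trivial,
    Matrix.toEuclideanLin_conjTranspose_eq_adjoint,
    LinearMap.adjoint_toContinuousLinearMap]
  exact LinearIsometryEquiv.norm_map ContinuousLinearMap.adjoint _

lemma equiv_symm_smul {k : ℕ} (c : ℝ) (v : Fin k → ℝ) :
    (WithLp.equiv 2 (Fin k → ℝ)).symm (c • v) = c • (WithLp.equiv 2 (Fin k → ℝ)).symm v := rfl

lemma l2_smul {k : ℕ} (c : ℝ) (v : Fin k → ℝ) : l2 (c • v) = |c| * l2 v := by
  rw [l2_eq_norm, l2_eq_norm, equiv_symm_smul, norm_smul]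
  rfl

lemma l2_sum_le {k : ℕ} {ι : Type*} (t : Finset ι) (f : ι → Fin k → ℝ) :
    l2 (∑ x ∈ t, f x) ≤ ∑ x ∈ t, l2 (f x) := by
  simp only [l2_eq_norm]
  have h : (WithLp.equiv 2 (Fin k → ℝ)).symm (∑ x ∈ t, f x)
      = ∑ x ∈ t, (WithLp.equiv 2 (Fin k → ℝ)).symm (f x) :=
    map_sum ((WithLp.linearEquiv 2 ℝ (Fin k → ℝ)).symm) f t
  rw [h]
  exact norm_sum_le _ _

lemma l2_add_le {k : ℕ} (u w : Fin k → ℝ) : l2 (u + w) ≤ l2 u + l2 w := by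
  simp only [l2_eq_norm]
  have h : (WithLp.equiv 2 (Fin k → ℝ)).symm (u + w)
      = (WithLp.equiv 2 (Fin k → ℝ)).symm u + (WithLp.equiv 2 (Fin k → ℝ)).symm w := rfl
  rw [h]
  exact norm_add_le _ _

lemma l2_isometry {a b : ℕ} {X : Matrix (Fin a) (Fin b) ℝ} (h : Xᵀ * X = 1)
    (u : Fin b → ℝ) : l2 (X *ᵥ u) = l2 u := by
  have key : ∀ (k : ℕ) (w : Fin k → ℝ), (∑ p, w p ^ 2) = w ⬝ᵥ w := by
    intro k w; simp [dotProduct, sq]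
  unfold l2
  rw [key, key, Matrix.dotProduct_mulVec]
  congr 1
  have h2 : (X *ᵥ u) ᵥ* X = Xᵀ *ᵥ (X *ᵥ u) := (Matrix.mulVec_transpose X _).symm
  rw [h2, Matrix.mulVec_mulVec, h, Matrix.one_mulVec]

lemma l2_nonneg {k : ℕ} (v : Fin k → ℝ) : 0 ≤ l2 v := Real.sqrt_nonneg _

lemma col_vecMulVec_single {a n : ℕ} (u : Fin n → Fin a → ℝ) (j : Fin n) :
    (fun p => (∑ k, Matrix.vecMulVec (u k) (Pi.single k (1:ℝ))) p j) = u j := by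
  funext p
  simp [Matrix.sum_apply, Matrix.vecMulVec_apply, Pi.single_apply]

lemma mulVec_eq_sum_cols {a n : ℕ} (X : Matrix (Fin a) (Fin n) ℝ) (v : Fin n → ℝ) :
    X *ᵥ v = ∑ j, v j • (fun p => X p j) := by
  funext p
  simp [Matrix.mulVec, dotProduct, Finset.sum_apply, mul_comm]

lemma vec_eq_sum_single {a : ℕ} (e : Fin a → ℝ) :
    e = ∑ p ∈ Finset.univ.filter (fun p => e p ≠ 0), e p • (Pi.single p 1 : Fin a → ℝ) := by
  rw [Finset.sum_filter_of_ne (fun p _ hp => by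
    intro h; exact hp (by simp [h]))]
  funext q
  simp [Finset.sum_apply, Pi.single_apply]

lemma l2_mulVec_sparse {a b : ℕ} (K : Matrix (Fin a) (Fin b) ℝ) (e : Fin b → ℝ)
    (s t c : ℝ) (hs : ∀ p, |e p| ≤ s) (ht : ∀ p, l2 (K *ᵥ Pi.single p 1) ≤ t)
    (ht0 : 0 ≤ t) (hs0 : 0 ≤ s)
    (hc : ((Finset.univ.filter fun p => e p ≠ 0).card : ℝ) ≤ c) :
    l2 (K *ᵥ e) ≤ c * s * t := by
  set T := Finset.univ.filter fun p => e p ≠ 0 with hT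
  have he : K *ᵥ e = ∑ p ∈ T, e p • (K *ᵥ Pi.single p 1) := by
    conv_lhs => rw [vec_eq_sum_single e]
    rw [← hT]
    have : K *ᵥ (∑ p ∈ T, e p • (Pi.single p 1 : Fin b → ℝ))
        = ∑ p ∈ T, K *ᵥ (e p • (Pi.single p 1 : Fin b → ℝ)) := by
      show K.mulVecLin _ = _
      rw [map_sum]; rfl
    rw [this]
    refine Finset.sum_congr rfl fun p _ => ?_
    show K.mulVecLin _ = _
    rw [_root_.map_smul]; rfl
  rw [he]
  calc l2 (∑ p ∈ T, e p • (K *ᵥ Pi.single p 1))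
      ≤ ∑ p ∈ T, l2 (e p • (K *ᵥ Pi.single p 1)) := l2_sum_le _ _
    _ ≤ ∑ p ∈ T, s * t := by
        refine Finset.sum_le_sum fun p _ => ?_
        rw [l2_smul]
        exact mul_le_mul (hs p) (ht p) (l2_nonneg _) hs0
    _ = (T.card : ℝ) * (s * t) := by rw [Finset.sum_const, nsmul_eq_mul]
    _ ≤ c * (s * t) := by
        exact mul_le_mul_of_nonneg_right hc (mul_nonneg hs0 ht0)
    _ = c * s * t := by ring

lemma l2_sub_le {k : ℕ} (u w : Fin k → ℝ) : l2 (u - w) ≤ l2 u + l2 w := by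
  simp only [l2_eq_norm]
  have h : (WithLp.equiv 2 (Fin k → ℝ)).symm (u - w)
      = (WithLp.equiv 2 (Fin k → ℝ)).symm u - (WithLp.equiv 2 (Fin k → ℝ)).symm w := rfl
  rw [h]
  exact norm_sub_le _ _



lemma scalar_ineq (μ δ l β nn : ℝ) (hμ : 1 ≤ μ) (hδ0 : 0 < δ)
    (hδ : δ ≤ 1 / (20 * μ ^ 2)) (hn5 : 5 * μ ^ 2 ≤ nn)
    (hl0 : 0 ≤ l) (hβ0 : 0 ≤ β) :
    l + ((nn-1)*δ*(l+β) + (nn-1)*β) ≤ (l/(4*μ^2) + (5/4)*β) * nn := by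
  have hn1 : (1:ℝ) ≤ nn := by nlinarith
  have key1 : 1 + (nn-1)*δ ≤ nn/(4*μ^2) := by
    have h1 : (nn-1)*δ ≤ nn*δ := by nlinarith
    have h2 : nn*δ ≤ nn/(20*μ^2) := by
      calc nn*δ ≤ nn*(1/(20*μ^2)) := mul_le_mul_of_nonneg_left hδ (by positivity)
        _ = nn/(20*μ^2) := by ring
    have h3 : nn/(4*μ^2) - nn/(20*μ^2) = nn/(5*μ^2) := by field_simp; ring
    have h4 : (1:ℝ) ≤ nn/(5*μ^2) := by
      rw [le_div_iff₀ (by positivity)]; linarith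
    linarith
  have key2 : (nn-1)*δ + (nn-1) ≤ (5/4)*nn := by
    have hδ1 : δ ≤ 1/20 := by
      refine le_trans hδ ?_
      apply one_div_le_one_div_of_le <;> nlinarith
    nlinarith [mul_le_mul_of_nonneg_left hδ1 (show (0:ℝ) ≤ nn-1 by linarith)]
  calc l + ((nn-1)*δ*(l+β) + (nn-1)*β)
      = l*(1+(nn-1)*δ) + β*((nn-1)*δ + (nn-1)) := by ring
    _ ≤ l*(nn/(4*μ^2)) + β*((5/4)*nn) :=
        add_le_add (mul_le_mul_of_nonneg_left key1 hl0) (mul_le_mul_of_nonneg_left key2 hβ0)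
    _ = (l/(4*μ^2) + (5/4)*β) * nn := by ring


/-- Lemma 2 of the paper: bound on `‖QᵢᵀMv‖_{ℓ2}`. -/
theorem stmt2 (m n d : ℕ) (hm : 0 < m) (hn : 0 < n) (hd : 0 < d)
    (μ ν δ α₁ : ℝ) (hμ : 1 ≤ μ) (hν : 0 < ν) (hα₁ : 0 < α₁)
    (hδ0 : 0 < δ) (hδ : δ ≤ 1 / (20 * μ ^ 2)) (hn5 : 5 * μ ^ 2 ≤ (n : ℝ))
    (Q : Fin n → Matrix (Fin m) (Fin d) ℝ)
    (hQortho : ∀ i, (Q i)ᵀ * Q i = 1)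
    (hQe : ∀ (p : Fin m) (j : Fin n),
      l2 ((Q j)ᵀ *ᵥ Pi.single p 1) ≤ ν * Real.sqrt ((d : ℝ) / m))
    (hQδ : ∀ i : Fin n,
      (∑ j ∈ Finset.univ.erase i, spec ((Q j)ᵀ * Q i)) ≤ ((n : ℝ) - 1) * δ)
    (Lstar Sstar S L : Matrix (Fin m) (Fin n) ℝ)
    (hScol : ∀ j : Fin n,
      ((Finset.univ.filter fun i => Sstar i j ≠ 0).card : ℝ) ≤ α₁ * m)
    (hsupp : supp (Sstar - S) ⊆ supp Sstar)
    (E G F Mm : Matrix (Fin m) (Fin n) ℝ) (s l : ℝ)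
    (hE : E = Sstar - S)
    (hG : G = ∑ i, Matrix.vecMulVec
        ((Q i * (Q i)ᵀ) *ᵥ fun p => (L - Lstar) p i) (Pi.single i 1))
    (hF : F = ∑ i, Matrix.vecMulVec
        ((Q i * (Q i)ᵀ) *ᵥ fun p => (S - Sstar) p i) (Pi.single i 1))
    (hM : Mm = F + G + E)
    (hs : s = linf E)
    (hl : l = ⨆ i, l2 fun p => G p i) :
    ∀ (i : Fin n) (v : Fin n → ℝ),
      l2 ((Q i)ᵀ *ᵥ (Mm *ᵥ v)) ≤
        (l / (4 * μ ^ 2) + (5 / 4) * α₁ * ν * Real.sqrt ((m : ℝ) * d) * s) * n * vinf v := by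
  intro i v
  have hm0 : (0:ℝ) < m := by exact_mod_cast hm
  have hn0 : (0:ℝ) < n := by exact_mod_cast hn
  have hμ2 : (1:ℝ) ≤ μ^2 := by nlinarith
  -- entries of E bounded by s
  have hEbound : ∀ (p : Fin m) (j : Fin n), |E p j| ≤ s := by
    intro p j
    rw [hs]
    calc |E p j| ≤ ⨆ j', |E p j'| := le_ciSup (f := fun j' => |E p j'|) (Finite.bddAbove_range _) j
      _ ≤ ⨆ p', ⨆ j', |E p' j'| := le_ciSup (f := fun p' => ⨆ j', |E p' j'|) (Finite.bddAbove_range _) p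
  have hs0 : 0 ≤ s := le_trans (abs_nonneg _) (hEbound ⟨0, hm⟩ ⟨0, hn⟩)
  set β := α₁ * ν * Real.sqrt ((m:ℝ)*d) * s with hβ
  have hβ0 : 0 ≤ β := by
    apply mul_nonneg _ hs0
    positivity
  have hsq : Real.sqrt ((d:ℝ)/m) * (m:ℝ) = Real.sqrt ((m:ℝ)*d) := by
    rw [show ((m:ℝ)*d) = ((d:ℝ)/m) * (m:ℝ)^2 by field_simp,
      Real.sqrt_mul (by positivity) ((m:ℝ)^2), Real.sqrt_sq hm0.le]
  have hmd : α₁ * (m:ℝ) * s * (ν * Real.sqrt ((d:ℝ)/m)) = β := by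
    rw [hβ, ← hsq]; ring
  -- sparsity of columns of E
  have hcard : ∀ j : Fin n, ((Finset.univ.filter fun p => E p j ≠ 0).card : ℝ) ≤ α₁ * m := by
    intro j
    refine le_trans ?_ (hScol j)
    have hsub : (Finset.univ.filter fun p => E p j ≠ 0)
        ⊆ (Finset.univ.filter fun p => Sstar p j ≠ 0) := by
      intro p hp
      simp only [Finset.mem_filter, Finset.mem_univ, true_and] at hp ⊢
      rw [hE] at hp
      exact hsupp (show (p, j) ∈ supp (Sstar - S) from hp)
    exact_mod_cast Finset.card_le_card hsub
  -- bound on Qkᵀ E-column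
  have hwB : ∀ (k j : Fin n), l2 ((Q k)ᵀ *ᵥ (fun p => E p j)) ≤ β := by
    intro k j
    have h := l2_mulVec_sparse (Q k)ᵀ (fun p => E p j) s (ν * Real.sqrt ((d:ℝ)/m)) (α₁*m)
      (fun p => hEbound p j) (fun p => hQe p k) (by positivity) hs0 (hcard j)
    rw [← hmd]
    calc l2 ((Q k)ᵀ *ᵥ (fun p => E p j)) ≤ α₁ * (m:ℝ) * s * (ν * Real.sqrt ((d:ℝ)/m)) := h
      _ = _ := by ring
  set u : Fin n → Fin d → ℝ := fun j => (Q j)ᵀ *ᵥ (fun p => (L - Lstar) p j) with hu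
  set w : Fin n → Fin d → ℝ := fun j => (Q j)ᵀ *ᵥ (fun p => E p j) with hw
  have hGcol : ∀ j, (fun p => G p j) = Q j *ᵥ u j := by
    intro j
    rw [hG, col_vecMulVec_single (fun k => (Q k * (Q k)ᵀ) *ᵥ fun p => (L - Lstar) p k) j,
      hu, ← Matrix.mulVec_mulVec]
  have hFcol : ∀ j, (fun p => F p j) = -(Q j *ᵥ w j) := by
    intro j
    rw [hF, col_vecMulVec_single (fun k => (Q k * (Q k)ᵀ) *ᵥ fun p => (S - Sstar) p k) j]
    have hSE : (fun p => (S - Sstar) p j) = -(fun p => E p j) := by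
      funext p; rw [hE]; simp [Matrix.sub_apply]
    rw [hSE, Matrix.mulVec_neg, hw, ← Matrix.mulVec_mulVec]
  have hcolM : ∀ j, (fun p => Mm p j) = Q j *ᵥ (u j - w j) + (fun p => E p j) := by
    intro j
    have h1 : (fun p => Mm p j)
        = (fun p => F p j) + (fun p => G p j) + (fun p => E p j) := by
      funext p; rw [hM]; simp [Matrix.add_apply]
    rw [h1, hFcol j, hGcol j, Matrix.mulVec_sub]
    abel
  have hMkey : ∀ j, (Q i)ᵀ *ᵥ (fun p => Mm p j)
      = ((Q i)ᵀ * Q j) *ᵥ (u j - w j) + (Q i)ᵀ *ᵥ (fun p => E p j) := by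
    intro j
    rw [hcolM j, Matrix.mulVec_add, Matrix.mulVec_mulVec]
  have hl_col : ∀ j, l2 (fun p => G p j) ≤ l := fun j =>
    hl ▸ le_ciSup (f := fun k => l2 fun p => G p k) (Finite.bddAbove_range _) j
  have hl0 : 0 ≤ l := le_trans (l2_nonneg _) (hl_col i)
  have hu_le : ∀ j, l2 (u j) ≤ l := by
    intro j
    rw [← l2_isometry (hQortho j) (u j), ← hGcol j]
    exact hl_col j
  -- per-column bounds
  have hcol_i : l2 ((Q i)ᵀ *ᵥ (fun p => Mm p i)) ≤ l := by
    rw [hMkey i, hQortho i, Matrix.one_mulVec]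
    have h2 : u i - w i + (Q i)ᵀ *ᵥ (fun p => E p i) = u i := by
      show u i - w i + w i = u i
      abel
    rw [h2]
    exact hu_le i
  have hcol_ne : ∀ j, j ≠ i →
      l2 ((Q i)ᵀ *ᵥ (fun p => Mm p j)) ≤ spec ((Q i)ᵀ * Q j) * (l + β) + β := by
    intro j hj
    rw [hMkey j]
    refine le_trans (l2_add_le _ _) (add_le_add ?_ (hwB i j))
    refine le_trans (l2_mulVec_le _ _) (mul_le_mul_of_nonneg_left ?_ (norm_nonneg _))
    exact le_trans (l2_sub_le _ _) (add_le_add (hu_le j) (hwB j j))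
  -- sum over erase
  have hcarderase : ((Finset.univ.erase i).card : ℝ) = (n:ℝ) - 1 := by
    rw [Finset.card_erase_of_mem (Finset.mem_univ i), Finset.card_univ, Fintype.card_fin,
      Nat.cast_sub hn, Nat.cast_one]
  have hspecsum : (∑ j ∈ Finset.univ.erase i, spec ((Q i)ᵀ * Q j)) ≤ ((n:ℝ)-1)*δ := by
    refine le_trans (le_of_eq (Finset.sum_congr rfl fun j _ => ?_)) (hQδ i)
    rw [show (Q i)ᵀ * Q j = ((Q j)ᵀ * Q i)ᵀ by
      rw [Matrix.transpose_mul, Matrix.transpose_transpose], spec_transpose]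
  have hsum : (∑ j, l2 ((Q i)ᵀ *ᵥ (fun p => Mm p j)))
      ≤ l + (((n:ℝ)-1)*δ*(l+β) + ((n:ℝ)-1)*β) := by
    rw [← Finset.add_sum_erase _ _ (Finset.mem_univ i)]
    refine add_le_add hcol_i ?_
    calc (∑ j ∈ Finset.univ.erase i, l2 ((Q i)ᵀ *ᵥ (fun p => Mm p j)))
        ≤ ∑ j ∈ Finset.univ.erase i, (spec ((Q i)ᵀ * Q j) * (l + β) + β) :=
          Finset.sum_le_sum fun j hj => hcol_ne j (Finset.ne_of_mem_erase hj)
      _ = (∑ j ∈ Finset.univ.erase i, spec ((Q i)ᵀ * Q j)) * (l + β)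
          + ((Finset.univ.erase i).card : ℝ) * β := by
          rw [Finset.sum_add_distrib, Finset.sum_const, ← Finset.sum_mul, nsmul_eq_mul]
      _ ≤ ((n:ℝ)-1)*δ*(l+β) + ((n:ℝ)-1)*β := by
          rw [hcarderase]
          exact add_le_add (mul_le_mul_of_nonneg_right hspecsum (by positivity)) le_rfl
  -- v bounds
  have hv : ∀ j, |v j| ≤ vinf v := fun j => le_ciSup (f := fun k => |v k|) (Finite.bddAbove_range _) j
  have hv0 : 0 ≤ vinf v := le_trans (abs_nonneg _) (hv i)
  have hscalar : l + (((n:ℝ)-1)*δ*(l+β) + ((n:ℝ)-1)*β) ≤ (l/(4*μ^2) + (5/4)*β) * n :=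
    scalar_ineq μ δ l β n hμ hδ0 hδ hn5 hl0 hβ0
  -- main chain
  calc l2 ((Q i)ᵀ *ᵥ (Mm *ᵥ v))
      = l2 (∑ j, v j • ((Q i)ᵀ *ᵥ (fun p => Mm p j))) := by
        rw [mulVec_eq_sum_cols Mm v]
        congr 1
        show (Q i)ᵀ.mulVecLin _ = _
        rw [map_sum]
        refine Finset.sum_congr rfl fun j _ => ?_
        rw [_root_.map_smul]; rfl
    _ ≤ ∑ j, l2 (v j • ((Q i)ᵀ *ᵥ (fun p => Mm p j))) := l2_sum_le _ _
    _ = ∑ j, |v j| * l2 ((Q i)ᵀ *ᵥ (fun p => Mm p j)) :=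
        Finset.sum_congr rfl fun j _ => l2_smul _ _
    _ ≤ ∑ j, vinf v * l2 ((Q i)ᵀ *ᵥ (fun p => Mm p j)) :=
        Finset.sum_le_sum fun j _ => mul_le_mul_of_nonneg_right (hv j) (l2_nonneg _)
    _ = vinf v * ∑ j, l2 ((Q i)ᵀ *ᵥ (fun p => Mm p j)) := by rw [← Finset.mul_sum]
    _ ≤ vinf v * ((l/(4*μ^2) + (5/4)*β) * n) :=
        mul_le_mul_of_nonneg_left (le_trans hsum hscalar) hv0
    _ = (l / (4 * μ ^ 2) + 5 / 4 * α₁ * ν * Real.sqrt ((m:ℝ) * d) * s) * n * vinf v := by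
        rw [hβ]; ring
end

section
/- Let M ∈ ℝ^{m×n}, σ* > 0, and unit vectors u* ∈ ℝ^m, v* ∈ ℝ^n. Set A = σ*·u*v*ᵀ + M. Suppose σ₁ ≠ 0, u₁ ∈ ℝ^m with ‖u₁‖_{ℓ2} = 1, and v₁ ∈ ℝ^n satisfy A v₁ = σ₁ u₁ and Aᵀ u₁ = σ₁ v₁. Then σ₁·u₁v₁ᵀ − σ*·u*v*ᵀ = −(u₁ᵀM v₁/σ₁)·σ*·u*v*ᵀ + (σ*(v*ᵀv₁)/σ₁)·u*·(u₁ᵀM) + (σ*(u₁ᵀu*)/σ₁)·(M v₁)·v*ᵀ + (1/σ₁)·(M v₁)(u₁ᵀM). -/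
open Matrix
open scoped BigOperators

lemma aux1 {m n : ℕ} (u : Fin m → ℝ) (v w : Fin n → ℝ) :
    Matrix.vecMulVec u v *ᵥ w = (v ⬝ᵥ w) • u := by
  ext i
  simp only [Matrix.mulVec, dotProduct, Matrix.vecMulVec_apply, Pi.smul_apply,
    smul_eq_mul, Finset.sum_mul]
  exact Finset.sum_congr rfl fun j _ => by ring

lemma aux2 {m n : ℕ} (u w : Fin m → ℝ) (v : Fin n → ℝ) :
    (Matrix.vecMulVec u v)ᵀ *ᵥ w = (w ⬝ᵥ u) • v := by
  ext j
  simp only [Matrix.mulVec, dotProduct, Matrix.transpose_apply,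
    Matrix.vecMulVec_apply, Pi.smul_apply, smul_eq_mul]
  rw [Finset.sum_mul]
  exact Finset.sum_congr rfl fun i _ => by ring

/-- decomposition of `σ₁u₁v₁ᵀ − σ*u*v*ᵀ` in terms of `M`, for
`A = σ*u*v*ᵀ + M` with `A v₁ = σ₁u₁`, `Aᵀu₁ = σ₁v₁`, `σ₁ ≠ 0`, `‖u₁‖ = 1`. -/
theorem stmt12 (m n : ℕ) (hm : 0 < m) (hn : 0 < n)
    (M : Matrix (Fin m) (Fin n) ℝ) (σs σ₁ : ℝ) (hσ : 0 < σs) (hσ₁ : σ₁ ≠ 0)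
    (us u₁ : Fin m → ℝ) (vs v₁ : Fin n → ℝ)
    (hus : l2 us = 1) (hvs : l2 vs = 1) (hu₁ : l2 u₁ = 1)
    (A : Matrix (Fin m) (Fin n) ℝ)
    (hA : A = σs • Matrix.vecMulVec us vs + M)
    (h1 : A *ᵥ v₁ = σ₁ • u₁) (h2 : Aᵀ *ᵥ u₁ = σ₁ • v₁) :
    σ₁ • Matrix.vecMulVec u₁ v₁ - σs • Matrix.vecMulVec us vs =
      (-(u₁ ⬝ᵥ (M *ᵥ v₁)) / σ₁) • (σs • Matrix.vecMulVec us vs)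
        + (σs * (vs ⬝ᵥ v₁) / σ₁) • Matrix.vecMulVec us (u₁ ᵥ* M)
        + (σs * (u₁ ⬝ᵥ us) / σ₁) • Matrix.vecMulVec (M *ᵥ v₁) vs
        + (1 / σ₁) • Matrix.vecMulVec (M *ᵥ v₁) (u₁ ᵥ* M) := by
  have hu : ∀ i, σ₁ * u₁ i = σs * (vs ⬝ᵥ v₁) * us i + (M *ᵥ v₁) i := by
    intro i
    have h := congrFun h1 i
    rw [hA, Matrix.add_mulVec, Matrix.smul_mulVec, aux1] at h
    simp only [Pi.add_apply, Pi.smul_apply, smul_eq_mul] at h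
    rw [← h]; ring
  have hv : ∀ j, σ₁ * v₁ j = σs * (u₁ ⬝ᵥ us) * vs j + (u₁ ᵥ* M) j := by
    intro j
    have h := congrFun h2 j
    rw [hA, Matrix.transpose_add, Matrix.transpose_smul, Matrix.add_mulVec,
      Matrix.smul_mulVec, aux2] at h
    rw [Matrix.mulVec_transpose] at h
    simp only [Pi.add_apply, Pi.smul_apply, smul_eq_mul] at h
    rw [← h]; ring
  have h3 : ∑ i, u₁ i ^ 2 = 1 := by
    have h4 : (0:ℝ) ≤ ∑ i, u₁ i ^ 2 := Finset.sum_nonneg fun i _ => sq_nonneg _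
    have := hu₁
    rw [l2] at this
    nlinarith [Real.sq_sqrt h4]
  have key : σ₁ = σs * (vs ⬝ᵥ v₁) * (u₁ ⬝ᵥ us) + u₁ ⬝ᵥ (M *ᵥ v₁) := by
    calc σ₁ = ∑ i, u₁ i * (σ₁ * u₁ i) := by
          rw [show ∑ i, u₁ i * (σ₁ * u₁ i) = σ₁ * ∑ i, u₁ i ^ 2 by
            rw [Finset.mul_sum]; exact Finset.sum_congr rfl fun i _ => by ring]
          rw [h3, mul_one]
      _ = ∑ i, u₁ i * (σs * (vs ⬝ᵥ v₁) * us i + (M *ᵥ v₁) i) :=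
          Finset.sum_congr rfl fun i _ => by rw [hu i]
      _ = σs * (vs ⬝ᵥ v₁) * (u₁ ⬝ᵥ us) + u₁ ⬝ᵥ (M *ᵥ v₁) := by
          simp only [dotProduct, Finset.mul_sum, ← Finset.sum_add_distrib]
          exact Finset.sum_congr rfl fun i _ => by ring
  ext i j
  simp only [Matrix.sub_apply, Matrix.add_apply, Matrix.smul_apply,
    Matrix.vecMulVec_apply, smul_eq_mul]
  rw [div_mul_eq_mul_div, div_mul_eq_mul_div, div_mul_eq_mul_div, div_mul_eq_mul_div,
    ← add_div, ← add_div, ← add_div, eq_div_iff hσ₁]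
  linear_combination (σ₁ * v₁ j) * hu i + (σs * (vs ⬝ᵥ v₁) * us i + (M *ᵥ v₁) i) * hv j
    - σs * us i * vs j * key
end

section
/- Let L* = σ*u*v*ᵀ with σ* > 0 and unit vectors u* ∈ ℝ^m, v* ∈ ℝ^n satisfying ‖u*‖_{ℓ∞} ≤ μ/√m and ‖v*‖_{ℓ∞} ≤ μ/√n. Let S* ∈ ℝ^{m×n}, and let D = L* + S* − Σ_{i=1}^n J_iΔτ*_i e_iᵀ, where J_i = Q_iR_i with ‖Q_jᵀe_i‖_{ℓ2} ≤ ν√(d/m) for all 1 ≤ i ≤ m, 1 ≤ j ≤ n, and max_i ‖R_iΔτ*_i‖_{ℓ2} ≤ γσ*/√(nd). Then for every index (i,j) with S*_{ij} = 0: |D_{ij}| ≤ (μ² + γν)·σ*/√(mn). Consequently, for any ζ₀ ≥ (μ² + γν)σ*/√(mn), Supp(S_{ζ₀}(D)) ⊆ Supp(S*). -/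
open Matrix
open scoped BigOperators

/-- entrywise bound `|D_{ij}| ≤ (μ² + γν)σ*/√(mn)` off the
support of `S*`, and the resulting support containment after soft-thresholding. -/
theorem stmt15 (m n d : ℕ) (hm : 0 < m) (hn : 0 < n) (hd : 0 < d)
    (μ ν γ σs : ℝ) (hμ : 0 < μ) (hν : 0 < ν) (hγ : 0 < γ) (hσ : 0 < σs)
    (us : Fin m → ℝ) (vs : Fin n → ℝ) (hus : l2 us = 1) (hvs : l2 vs = 1)
    (huinf : ∀ p, |us p| ≤ μ / Real.sqrt m)
    (hvinf : ∀ i, |vs i| ≤ μ / Real.sqrt n)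
    (J Q : Fin n → Matrix (Fin m) (Fin d) ℝ) (R : Fin n → Matrix (Fin d) (Fin d) ℝ)
    (hQR : ∀ i, J i = Q i * R i)
    (hQe : ∀ (p : Fin m) (j : Fin n),
      l2 ((Q j)ᵀ *ᵥ Pi.single p 1) ≤ ν * Real.sqrt ((d : ℝ) / m))
    (Δτs : Matrix (Fin d) (Fin n) ℝ)
    (hRτ : ∀ i, l2 (R i *ᵥ fun p => Δτs p i) ≤ γ * σs / Real.sqrt ((n : ℝ) * d))
    (Lstar Sstar D : Matrix (Fin m) (Fin n) ℝ)
    (hL : Lstar = σs • Matrix.vecMulVec us vs)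
    (hD : D = Lstar + Sstar -
        ∑ i, Matrix.vecMulVec (J i *ᵥ fun p => Δτs p i) (Pi.single i 1)) :
    (∀ (i : Fin m) (j : Fin n), Sstar i j = 0 →
        |D i j| ≤ (μ ^ 2 + γ * ν) * σs / Real.sqrt ((m : ℝ) * n)) ∧
      ∀ ζ₀ : ℝ, (μ ^ 2 + γ * ν) * σs / Real.sqrt ((m : ℝ) * n) ≤ ζ₀ →
        supp (sthr ζ₀ D) ⊆ supp Sstar := by

  have hmn : (0:ℝ) < Real.sqrt ((m:ℝ) * n) := by
    apply Real.sqrt_pos.2; positivity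
  have hsm : (0:ℝ) < Real.sqrt m := Real.sqrt_pos.2 (by exact_mod_cast hm)
  have hsn : (0:ℝ) < Real.sqrt n := Real.sqrt_pos.2 (by exact_mod_cast hn)
  have hsd : (0:ℝ) < Real.sqrt d := Real.sqrt_pos.2 (by exact_mod_cast hd)
  have key : ∀ (i : Fin m) (j : Fin n), Sstar i j = 0 →
      |D i j| ≤ (μ ^ 2 + γ * ν) * σs / Real.sqrt ((m : ℝ) * n) := by
    intro i j hS
    have hDij : D i j = σs * (us i * vs j) - (J j *ᵥ fun p => Δτs p j) i := by
      subst hD hL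
      simp [Matrix.sub_apply, Matrix.add_apply, Matrix.sum_apply,
        Matrix.vecMulVec_apply, hS, Pi.single_apply, mul_ite]
    -- Cauchy-Schwarz for the correction term
    have hrw : (J j *ᵥ fun p => Δτs p j) i
        = ∑ k, ((Q j)ᵀ *ᵥ Pi.single i 1) k * ((R j *ᵥ fun p => Δτs p j) k) := by
      rw [hQR, ← Matrix.mulVec_mulVec]
      simp [Matrix.mulVec, dotProduct, Matrix.transpose_apply,
        Pi.single_apply, mul_ite, Finset.mul_sum]
    have hcs : |(J j *ᵥ fun p => Δτs p j) i|
        ≤ l2 ((Q j)ᵀ *ᵥ Pi.single i 1) * l2 (R j *ᵥ fun p => Δτs p j) := by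
      rw [hrw]
      set a := (Q j)ᵀ *ᵥ Pi.single i (1:ℝ)
      set b := (R j *ᵥ fun p => Δτs p j)
      have h1 : (∑ k, a k * b k) ^ 2 ≤ (∑ k, a k ^ 2) * (∑ k, b k ^ 2) :=
        Finset.sum_mul_sq_le_sq_mul_sq Finset.univ a b
      have h2 : |∑ k, a k * b k| = Real.sqrt ((∑ k, a k * b k) ^ 2) := by
        rw [Real.sqrt_sq_eq_abs]
      rw [h2]
      unfold l2
      rw [← Real.sqrt_mul (by positivity)]
      exact Real.sqrt_le_sqrt h1
    have hl2a : l2 ((Q j)ᵀ *ᵥ Pi.single i 1) ≤ ν * Real.sqrt ((d : ℝ) / m) := hQe i j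
    have hl2b : l2 (R j *ᵥ fun p => Δτs p j) ≤ γ * σs / Real.sqrt ((n : ℝ) * d) := hRτ j
    have hl2nn : (0:ℝ) ≤ l2 ((Q j)ᵀ *ᵥ Pi.single i 1) := Real.sqrt_nonneg _
    have hl2bnn : (0:ℝ) ≤ l2 (R j *ᵥ fun p => Δτs p j) := Real.sqrt_nonneg _
    have hterm2 : |(J j *ᵥ fun p => Δτs p j) i| ≤ γ * ν * σs / Real.sqrt ((m:ℝ) * n) := by
      have hmul : l2 ((Q j)ᵀ *ᵥ Pi.single i 1) * l2 (R j *ᵥ fun p => Δτs p j)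
          ≤ (ν * Real.sqrt ((d : ℝ) / m)) * (γ * σs / Real.sqrt ((n : ℝ) * d)) :=
        mul_le_mul hl2a hl2b hl2bnn (by positivity)
      have heq : (ν * Real.sqrt ((d : ℝ) / m)) * (γ * σs / Real.sqrt ((n : ℝ) * d))
          = γ * ν * σs / Real.sqrt ((m:ℝ) * n) := by
        rw [Real.sqrt_div (by positivity), Real.sqrt_mul (by positivity),
          Real.sqrt_mul (by positivity)]
        field_simp
      rw [← heq]
      exact le_trans hcs hmul
    have hterm1 : |σs * (us i * vs j)| ≤ μ ^ 2 * σs / Real.sqrt ((m:ℝ) * n) := by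
      rw [abs_mul, abs_mul, abs_of_pos hσ]
      have h1 := huinf i
      have h2 := hvinf j
      have := mul_le_mul h1 h2 (abs_nonneg _) (by positivity)
      calc σs * (|us i| * |vs j|) ≤ σs * ((μ / Real.sqrt m) * (μ / Real.sqrt n)) := by
            exact mul_le_mul_of_nonneg_left this hσ.le
        _ = μ ^ 2 * σs / Real.sqrt ((m:ℝ) * n) := by
            rw [Real.sqrt_mul (by positivity)]
            field_simp
    calc |D i j| = |σs * (us i * vs j) - (J j *ᵥ fun p => Δτs p j) i| := by rw [hDij]
      _ ≤ |σs * (us i * vs j)| + |(J j *ᵥ fun p => Δτs p j) i| := abs_sub _ _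
      _ ≤ μ ^ 2 * σs / Real.sqrt ((m:ℝ) * n) + γ * ν * σs / Real.sqrt ((m:ℝ) * n) :=
          add_le_add hterm1 hterm2
      _ = (μ ^ 2 + γ * ν) * σs / Real.sqrt ((m : ℝ) * n) := by ring
  refine ⟨key, ?_⟩
  intro ζ₀ hζ p hp
  by_contra hS
  simp only [supp, Set.mem_setOf_eq, not_not] at hS
  apply hp
  have hb : |D p.1 p.2| ≤ ζ₀ := le_trans (key p.1 p.2 hS) hζ
  simp only [supp, Set.mem_setOf_eq, sthr, Matrix.of_apply, not_not]
  rw [max_eq_right (by linarith), mul_zero]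
end
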